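/- For fixed q, k ≠ 0, φ(q) ≠ 0, every function I : (0,1] → ℝ that is continuous, not identically zero, satisfies I(1) = 0, and satisfies I(p₁p₂)/k = I(p₁)/k + I(p₂)/k + φ(q)·(I(p₁)/k)·(I(p₂)/k) for all p₁,p₂ ∈ (0,1], is of the form I(p) = (k/φ(q))·(p^α - 1) for some real α. -/

import Mathlib

theorem stmt18 (k φ : ℝ) (hk : k ≠ 0) (hφ : φ ≠ 0) (I : ℝ → ℝ)
    (hc : ContinuousOn I (Set.Ioc (0:ℝ) 1))
    (hne : ¬ ∀ p ∈ Set.Ioc (0:ℝ) 1, I p = 0)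
    (hI1 : I 1 = 0)
    (hps : ∀ p₁ ∈ Set.Ioc (0:ℝ) 1, ∀ p₂ ∈ Set.Ioc (0:ℝ) 1,
      I (p₁ * p₂) / k = I p₁ / k + I p₂ / k + φ * (I p₁ / k) * (I p₂ / k)) :
    ∃ α : ℝ, ∀ p ∈ Set.Ioc (0:ℝ) 1, I p = k / φ * (p ^ α - 1) := by
  set f : ℝ → ℝ := fun p => 1 + φ * (I p / k) with hf
  have hfc : ContinuousOn f (Set.Ioc (0:ℝ) 1) := by
    apply continuousOn_const.add (continuousOn_const.mul (hc.div_const k))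
  have hf1 : f 1 = 1 := by simp [hf, hI1]
  have hmul : ∀ p₁ ∈ Set.Ioc (0:ℝ) 1, ∀ p₂ ∈ Set.Ioc (0:ℝ) 1,
      f (p₁ * p₂) = f p₁ * f p₂ := by
    intro p₁ h₁ p₂ h₂
    have := hps p₁ h₁ p₂ h₂
    simp only [hf]
    rw [this]; ring
  -- membership helper
  have hmem : ∀ p ∈ Set.Ioc (0:ℝ) 1, ∀ q ∈ Set.Ioc (0:ℝ) 1, p * q ∈ Set.Ioc (0:ℝ) 1 := by
    intro p hp q hq
    exact ⟨mul_pos hp.1 hq.1, mul_le_one₀ hp.2 hq.1.le hq.2⟩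
  -- f is nonneg
  have hfnn : ∀ p ∈ Set.Ioc (0:ℝ) 1, 0 ≤ f p := by
    intro p hp
    have hs : Real.sqrt p ∈ Set.Ioc (0:ℝ) 1 := by
      constructor
      · exact Real.sqrt_pos.mpr hp.1
      · exact Real.sqrt_le_one.mpr hp.2
    have : Real.sqrt p * Real.sqrt p = p := Real.mul_self_sqrt hp.1.le
    rw [← this, hmul _ hs _ hs]
    exact mul_self_nonneg _
  -- f is positive
  have hfpos : ∀ p ∈ Set.Ioc (0:ℝ) 1, 0 < f p := by
    intro p hp
    rcases (hfnn p hp).lt_or_eq with h | h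
    · exact h
    exfalso
    -- define q n = p ^ ((1/2)^n)
    set q : ℕ → ℝ := fun n => p ^ ((2⁻¹ : ℝ) ^ n) with hq
    have hqmem : ∀ n, q n ∈ Set.Ioc (0:ℝ) 1 := by
      intro n
      constructor
      · exact Real.rpow_pos_of_pos hp.1 _
      · exact Real.rpow_le_one hp.1.le hp.2 (by positivity)
    have hqzero : ∀ n, f (q n) = 0 := by
      intro n
      induction n with
      | zero => simpa [hq] using h.symm
      | succ m ih =>
        have hsq : q (m+1) * q (m+1) = q m := by
          rw [hq]
          rw [← Real.rpow_add hp.1]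
          ring_nf
        have := hmul _ (hqmem (m+1)) _ (hqmem (m+1))
        rw [hsq] at this
        rcases mul_eq_zero.mp (this ▸ ih) with h' | h' <;> exact h'
    have hqlim : Filter.Tendsto q Filter.atTop (nhds 1) := by
      have h0 : Filter.Tendsto (fun n => ((2⁻¹:ℝ)) ^ n) Filter.atTop (nhds 0) :=
        tendsto_pow_atTop_nhds_zero_of_lt_one (by norm_num) (by norm_num)
      have := Filter.Tendsto.rpow (tendsto_const_nhds : Filter.Tendsto (fun _ : ℕ => p) Filter.atTop (nhds p)) h0 (Or.inl hp.1.ne')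
      simpa only [Real.rpow_zero] using this
    have hqlim' : Filter.Tendsto q Filter.atTop (nhdsWithin 1 (Set.Ioc (0:ℝ) 1)) :=
      tendsto_nhdsWithin_of_tendsto_nhds_of_eventually_within _ hqlim
        (Filter.Eventually.of_forall hqmem)
    have hflim : Filter.Tendsto (fun n => f (q n)) Filter.atTop (nhds (f 1)) :=
      (hfc 1 ⟨one_pos, le_refl 1⟩).tendsto.comp hqlim'
    have : f 1 = 0 := by
      have : Filter.Tendsto (fun _ : ℕ => (0:ℝ)) Filter.atTop (nhds (f 1)) := by
        simpa [hqzero] using hflim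
      exact (tendsto_nhds_unique tendsto_const_nhds this).symm
    rw [hf1] at this; exact one_ne_zero this
  -- define h on [0,∞)
  set g : ℝ → ℝ := fun x => Real.log (f (Real.exp (-x))) with hg
  have hexpmem : ∀ x : ℝ, 0 ≤ x → Real.exp (-x) ∈ Set.Ioc (0:ℝ) 1 := by
    intro x hx
    exact ⟨Real.exp_pos _, Real.exp_le_one_iff.mpr (by linarith)⟩
  have hgadd : ∀ x y : ℝ, 0 ≤ x → 0 ≤ y → g (x + y) = g x + g y := by
    intro x y hx hy
    have hxy : Real.exp (-(x+y)) = Real.exp (-x) * Real.exp (-y) := by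
      rw [← Real.exp_add]; ring_nf
    rw [hg]
    simp only
    rw [hxy, hmul _ (hexpmem x hx) _ (hexpmem y hy),
      Real.log_mul (hfpos _ (hexpmem x hx)).ne' (hfpos _ (hexpmem y hy)).ne']
  have hg0 : g 0 = 0 := by simp [hg, hf1]
  have hgc : ContinuousOn g (Set.Ici (0:ℝ)) := by
    apply ContinuousOn.log
    · apply hfc.comp (Continuous.continuousOn (by continuity))
      intro x hx; exact hexpmem x hx
    · intro x hx; exact (hfpos _ (hexpmem x hx)).ne'
  -- extend to H
  set H : ℝ → ℝ := fun x => g (max x 0) - g (max (-x) 0) with hH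
  have hHeq : ∀ x : ℝ, 0 ≤ x → H x = g x := by
    intro x hx
    show g (max x 0) - g (max (-x) 0) = g x
    rw [max_eq_left hx, max_eq_right (neg_nonpos.mpr hx), hg0]; ring
  have hHneg : ∀ z : ℝ, z ≤ 0 → H z = - g (-z) := by
    intro z hz
    show g (max z 0) - g (max (-z) 0) = - g (-z)
    rw [max_eq_right hz, max_eq_left (neg_nonneg.mpr hz), hg0]; ring
  have hHadd : ∀ x y : ℝ, H (x + y) = H x + H y := by
    have key : ∀ x y : ℝ, 0 ≤ x → H (x + y) = H x + H y := by
      intro x y hx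
      rcases le_or_gt 0 y with hy | hy
      · rw [hHeq _ hx, hHeq _ hy, hHeq _ (by linarith), hgadd _ _ hx hy]
      rcases le_or_gt 0 (x + y) with hxy | hxy
      · -- x+y ≥ 0, y < 0 : g x = g(x+y) + g(-y)
        have : g ((x+y) + (-y)) = g (x+y) + g (-y) := hgadd _ _ hxy (by linarith)
        simp only [add_neg_cancel_right] at this
        rw [hHeq _ hx, hHeq _ hxy]
        rw [hHneg _ hy.le, this]; ring
      · -- x + y < 0, x ≥ 0: g(-y) = g(-(x+y)) + g x
        have : g (-(x+y) + x) = g (-(x+y)) + g x := hgadd _ _ (by linarith) hx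
        have h2 : -(x+y) + x = -y := by ring
        rw [h2] at this
        rw [hHneg _ hxy.le, hHneg _ hy.le, hHeq _ hx, this]; ring
    intro x y
    rcases le_or_gt 0 x with hx | hx
    · exact key x y hx
    rcases le_or_gt 0 y with hy | hy
    · rw [add_comm, add_comm (H x)]; exact key y x hy
    -- both negative
    rw [hHneg _ (by linarith), hHneg _ hx.le, hHneg _ hy.le]
    have : g (-x + -y) = g (-x) + g (-y) := hgadd _ _ (by linarith) (by linarith)
    have h2 : -(x+y) = -x + -y := by ring
    rw [h2, this]; ring
  have hHc : Continuous H := by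
    have hmax : ∀ x : ℝ, max x 0 ∈ Set.Ici (0:ℝ) := fun x => le_max_right x 0
    exact ((hgc.comp_continuous (continuous_id.max continuous_const) hmax)).sub
      (hgc.comp_continuous (continuous_neg.max continuous_const) (fun x => hmax (-x)))
  -- H is linear
  set Hm : ℝ →+ ℝ := AddMonoidHom.mk' H (fun x y => hHadd x y) with hHm
  have hlin : ∀ x : ℝ, H x = x * H 1 := by
    intro x
    have := (Hm.toRealLinearMap hHc).map_smul x 1
    simpa [hHm, smul_eq_mul] using this
  -- conclude
  refine ⟨-(H 1), ?_⟩
  intro p hp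
  have hx : (0:ℝ) ≤ -Real.log p := by
    simpa using Real.log_nonpos hp.1.le hp.2
  have hexp : Real.exp (-(-Real.log p)) = p := by
    rw [neg_neg]; exact Real.exp_log hp.1
  have hfp : f p = p ^ (-(H 1)) := by
    have h1 : Real.log (f p) = H (-Real.log p) := by
      rw [hHeq _ hx, hg]; simp only [hexp]
    rw [hlin] at h1
    have : f p = Real.exp (-Real.log p * H 1) := by
      rw [← h1, Real.exp_log (hfpos p hp)]
    rw [this, Real.rpow_def_of_pos hp.1]
    ring_nf
  have : 1 + φ * (I p / k) = p ^ (-(H 1)) := hfp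
  field_simp at this
  field_simp
  linarith
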